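/- Let β > 0 with β ≠ 1, and let (a_k)_{k≥1} be a sequence of nonnegative real numbers with a_1 ≤ 1 and a_k ≤ 1 − a_1² for all k ≥ 2. Then for every r ∈ (0,1) satisfying 3(1−(1−r)^{1−β})/(1−β) ≥ 2((1−r)^{−β} − 1)/β, one has Σ_{k=0}^∞ r^{k+1} · (1/(k+1)) · Σ_{n=0}^k (Γ(k−n+β)/(Γ(k−n+1)Γ(β))) · a_{n+1} ≤ (1−(1−r)^{1−β})/(1−β). -/

import Mathlib

open Real Finset MeasureTheory Set

/-- Bohr-type inequality for the β-Cesàro operator applied to functions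
vanishing at the origin (remark following Theorem 2.1, real coefficient form). -/
noncomputable def ccoef (γ : ℝ) (j : ℕ) : ℝ :=
  Real.Gamma ((j : ℝ) + γ) / (Real.Gamma ((j : ℝ) + 1) * Real.Gamma γ)

lemma ccoef_fact (γ : ℝ) (j : ℕ) :
    ccoef γ j = Real.Gamma ((j : ℝ) + γ) / ((Nat.factorial j : ℝ) * Real.Gamma γ) := by
  rw [ccoef, Real.Gamma_nat_eq_factorial]

lemma ccoef_nonneg {γ : ℝ} (hγ : 0 < γ) (j : ℕ) : 0 ≤ ccoef γ j := by
  have h1 : 0 < Real.Gamma ((j : ℝ) + γ) := Real.Gamma_pos_of_pos (by positivity)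
  have h2 : 0 < Real.Gamma ((j : ℝ) + 1) := Real.Gamma_pos_of_pos (by positivity)
  have h3 : 0 < Real.Gamma γ := Real.Gamma_pos_of_pos hγ
  exact le_of_lt (div_pos h1 (mul_pos h2 h3))

lemma hasSum_of_ofReal_tsum {f : ℕ → ℝ} {L : ℝ} (hf : ∀ k, 0 ≤ f k) (hL : 0 ≤ L)
    (h : ∑' k, ENNReal.ofReal (f k) = ENNReal.ofReal L) : HasSum f L := by
  have h' := ENNReal.summable_toReal (by rw [h]; exact ENNReal.ofReal_ne_top)
  have hsum : Summable f := h'.congr fun k => ENNReal.toReal_ofReal (hf k)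
  have he : ENNReal.ofReal (∑' k, f k) = ENNReal.ofReal L := by
    rw [ENNReal.ofReal_tsum_of_nonneg hf hsum, h]
  have := (ENNReal.ofReal_eq_ofReal_iff (tsum_nonneg hf) hL).mp he
  exact this ▸ hsum.hasSum

lemma hasSum_ccoef_pow {γ : ℝ} (hγ : 0 < γ) {t : ℝ} (ht0 : 0 ≤ t) (ht1 : t < 1) :
    HasSum (fun k : ℕ => ccoef γ k * t ^ k) ((1 - t) ^ (-γ)) := by
  have hΓ : 0 < Real.Gamma γ := Real.Gamma_pos_of_pos hγ
  have h1t : 0 < 1 - t := by linarith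
  set f : ℕ → ℝ → ℝ := fun k s =>
    t ^ k / ((Nat.factorial k : ℝ) * Real.Gamma γ) * (Real.exp (-s) * s ^ ((k : ℝ) + γ - 1)) with hf
  have hint : ∀ k, IntegrableOn (f k) (Ioi 0) := fun k =>
    (Real.GammaIntegral_convergent (by positivity : (0:ℝ) < (k : ℝ) + γ)).const_mul _
  have hval : ∀ k, ∫ s in Ioi 0, f k s = ccoef γ k * t ^ k := by
    intro k
    rw [hf]
    simp only
    rw [MeasureTheory.integral_const_mul,
      ← Real.Gamma_eq_integral (by positivity : (0:ℝ) < (k : ℝ) + γ), ccoef_fact]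
    ring
  have hfnn : ∀ k, 0 ≤ᵐ[volume.restrict (Ioi 0)] f k := by
    intro k
    filter_upwards [ae_restrict_mem measurableSet_Ioi] with s hs
    have : (0:ℝ) < s := hs
    positivity
  -- pointwise sum
  have hpt : ∀ s : ℝ, s ∈ Ioi (0:ℝ) →
      HasSum (fun k => f k s) (s ^ (γ - 1) * Real.exp (-((1 - t) * s)) * (Real.Gamma γ)⁻¹) := by
    intro s hs
    have hs' : (0:ℝ) < s := hs
    have hgeo : HasSum (fun k : ℕ => (t * s) ^ k / (Nat.factorial k : ℝ)) (Real.exp (t * s)) := by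
      rw [Real.exp_eq_exp_ℝ]
      exact NormedSpace.expSeries_div_hasSum_exp (t * s)
    have h2 := hgeo.mul_right (Real.exp (-s) * s ^ (γ - 1) * (Real.Gamma γ)⁻¹)
    have hfun : ∀ k : ℕ, (t * s) ^ k / (Nat.factorial k : ℝ) *
        (Real.exp (-s) * s ^ (γ - 1) * (Real.Gamma γ)⁻¹) = f k s := by
      intro k
      rw [hf]
      simp only
      have hsplit : s ^ ((k : ℝ) + γ - 1) = s ^ (k : ℕ) * s ^ (γ - 1) := by
        rw [← Real.rpow_natCast s k, ← Real.rpow_add hs']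
        ring_nf
      rw [hsplit, mul_pow]
      field_simp
    have hv : Real.exp (t * s) * (Real.exp (-s) * s ^ (γ - 1) * (Real.Gamma γ)⁻¹)
        = s ^ (γ - 1) * Real.exp (-((1 - t) * s)) * (Real.Gamma γ)⁻¹ := by
      have hee : Real.exp (t * s) * Real.exp (-s) = Real.exp (-((1 - t) * s)) := by
        rw [← Real.exp_add]; ring_nf
      rw [← mul_assoc, ← mul_assoc, hee]; ring
    convert h2 using 1
    · rfl
    · exact funext fun k => (hfun k).symm
    · exact hv.symm
  have hint2 : IntegrableOn
      (fun s : ℝ => s ^ (γ - 1) * Real.exp (-((1 - t) * s)) * (Real.Gamma γ)⁻¹) (Ioi 0) := by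
    have h0 := integrableOn_rpow_mul_exp_neg_mul_rpow
      (by linarith : (-1:ℝ) < γ - 1) (zero_lt_one : (0:ℝ) < 1) h1t
    have h1 := h0.mul_const (Real.Gamma γ)⁻¹
    have heq : (fun s : ℝ => s ^ (γ - 1) * Real.exp (-((1 - t) * s)) * (Real.Gamma γ)⁻¹)
        = fun x : ℝ => x ^ (γ - 1) * Real.exp ((t - 1) * x) * (Real.Gamma γ)⁻¹ := by
      funext x; ring_nf
    rw [IntegrableOn, heq]
    simpa [Real.rpow_one, neg_mul] using h1
  have hval2 : ∫ s in Ioi 0, s ^ (γ - 1) * Real.exp (-((1 - t) * s)) * (Real.Gamma γ)⁻¹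
      = (1 - t) ^ (-γ) := by
    rw [MeasureTheory.integral_mul_const, Real.integral_rpow_mul_exp_neg_mul_Ioi hγ h1t,
      one_div, Real.inv_rpow h1t.le, mul_assoc, mul_inv_cancel₀ hΓ.ne', mul_one,
      ← Real.rpow_neg h1t.le]
  have hnn2 : 0 ≤ᵐ[volume.restrict (Ioi 0)]
      fun s : ℝ => s ^ (γ - 1) * Real.exp (-((1 - t) * s)) * (Real.Gamma γ)⁻¹ := by
    filter_upwards [ae_restrict_mem measurableSet_Ioi] with s hs
    have hs' : (0:ℝ) < s := hs
    positivity
  have key : ∑' k, ENNReal.ofReal (ccoef γ k * t ^ k) = ENNReal.ofReal ((1 - t) ^ (-γ)) := by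
    have step1 : ∀ k, ENNReal.ofReal (ccoef γ k * t ^ k)
        = ∫⁻ s in Ioi 0, ENNReal.ofReal (f k s) := by
      intro k
      rw [← hval k]
      exact MeasureTheory.ofReal_integral_eq_lintegral_ofReal (hint k) (hfnn k)
    have hmeas : ∀ k : ℕ, AEMeasurable (fun s => ENNReal.ofReal (f k s))
        (volume.restrict (Ioi (0:ℝ))) := fun k =>
      ENNReal.measurable_ofReal.comp_aemeasurable (hint k).aestronglyMeasurable.aemeasurable
    have hcongr : (∫⁻ s in Ioi (0:ℝ), ∑' k, ENNReal.ofReal (f k s))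
        = ∫⁻ s in Ioi (0:ℝ),
          ENNReal.ofReal (s ^ (γ - 1) * Real.exp (-((1 - t) * s)) * (Real.Gamma γ)⁻¹) := by
      refine setLIntegral_congr_fun measurableSet_Ioi (fun s hs => ?_)
      have h := hpt s hs
      have hs' : (0:ℝ) < s := hs
      have hknn : ∀ k : ℕ, 0 ≤ f k s := by
        intro k
        rw [hf]
        simp only
        positivity
      rw [← h.tsum_eq, ← ENNReal.ofReal_tsum_of_nonneg hknn h.summable]
    simp_rw [step1]
    rw [← MeasureTheory.lintegral_tsum hmeas, hcongr,
      ← MeasureTheory.ofReal_integral_eq_lintegral_ofReal hint2 hnn2, hval2]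
  exact hasSum_of_ofReal_tsum (fun k => mul_nonneg (ccoef_nonneg hγ k) (pow_nonneg ht0 k))
    (Real.rpow_nonneg h1t.le _) key

lemma sum_ccoef {γ : ℝ} (hγ : 0 < γ) (m : ℕ) :
    ∑ j ∈ Finset.range (m + 1), ccoef γ j = ccoef (γ + 1) m := by
  induction m with
  | zero =>
      have h1 : Real.Gamma γ ≠ 0 := (Real.Gamma_pos_of_pos hγ).ne'
      have h2 : Real.Gamma (γ + 1) ≠ 0 := (Real.Gamma_pos_of_pos (by linarith)).ne'
      simp [ccoef, Real.Gamma_one, div_self, h1, h2]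
  | succ m ih =>
      rw [Finset.sum_range_succ, ih]
      have hA : 0 < Real.Gamma ((m : ℝ) + γ) := Real.Gamma_pos_of_pos (by positivity)
      have hΓ : 0 < Real.Gamma γ := Real.Gamma_pos_of_pos hγ
      have e1 : Real.Gamma ((m : ℝ) + (γ + 1)) = ((m : ℝ) + γ) * Real.Gamma ((m : ℝ) + γ) := by
        rw [show (m : ℝ) + (γ + 1) = ((m : ℝ) + γ) + 1 by ring,
          Real.Gamma_add_one (by positivity)]
      have e2 : Real.Gamma (((m : ℕ) + 1 : ℝ) + γ) = ((m : ℝ) + γ) * Real.Gamma ((m : ℝ) + γ) := by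
        rw [show ((m : ℕ) + 1 : ℝ) + γ = ((m : ℝ) + γ) + 1 by ring,
          Real.Gamma_add_one (by positivity)]
      have e3 : Real.Gamma (((m : ℕ) + 1 : ℝ) + (γ + 1))
          = (((m : ℝ) + γ) + 1) * (((m : ℝ) + γ) * Real.Gamma ((m : ℝ) + γ)) := by
        rw [show ((m : ℕ) + 1 : ℝ) + (γ + 1) = (((m : ℝ) + γ) + 1) + 1 by ring,
          Real.Gamma_add_one (by positivity), show (m : ℝ) + γ + 1 = ((m : ℝ) + γ) + 1 by ring,
          Real.Gamma_add_one (by positivity)]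
      have e4 : Real.Gamma (γ + 1) = γ * Real.Gamma γ := Real.Gamma_add_one hγ.ne'
      have e5 : ((m + 1 : ℕ).factorial : ℝ) = ((m : ℝ) + 1) * (m.factorial : ℝ) := by
        rw [Nat.factorial_succ]; push_cast; ring
      rw [ccoef_fact, ccoef_fact, ccoef_fact]
      push_cast
      push_cast at e2 e3 e5
      rw [e1, e2, e3, e4, e5]
      have hm : ((m.factorial : ℝ)) ≠ 0 := by positivity
      field_simp
      ring

/-- partial sums of the coefficients -/
noncomputable def psum (γ : ℝ) (k : ℕ) : ℝ := ∑ j ∈ Finset.range k, ccoef γ j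

lemma psum_nonneg {γ : ℝ} (hγ : 0 < γ) (k : ℕ) : 0 ≤ psum γ k :=
  Finset.sum_nonneg fun j _ => ccoef_nonneg hγ j

lemma hasSum_psum_pow {γ : ℝ} (hγ : 0 < γ) {t : ℝ} (ht0 : 0 ≤ t) (ht1 : t < 1) :
    HasSum (fun k : ℕ => psum γ k * t ^ k) (t * (1 - t) ^ (-(γ + 1))) := by
  have h := (hasSum_ccoef_pow (by linarith : (0:ℝ) < γ + 1) ht0 ht1).mul_left t
  have h2 : HasSum (fun n : ℕ => psum γ (n + 1) * t ^ (n + 1)) (t * (1 - t) ^ (-(γ + 1))) := by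
    convert h using 1
    rfl
    funext n
    rw [psum, sum_ccoef hγ n]
    ring
  have h3 := (hasSum_nat_add_iff (f := fun k : ℕ => psum γ k * t ^ k) 1).mp h2
  simpa [psum] using h3

lemma hasSum_mul_integral {r : ℝ} (hr0 : 0 < r) (hr1 : r < 1) (f : ℕ → ℝ) (hf : ∀ k, 0 ≤ f k)
    (g : ℝ → ℝ) (hg : ∀ t ∈ Ioc (0:ℝ) r, HasSum (fun k => f k * t ^ k) (g t))
    (hgi : IntegrableOn g (Ioc 0 r)) :
    HasSum (fun k : ℕ => f k * (r ^ (k + 1) / ((k : ℝ) + 1))) (∫ t in Ioc (0:ℝ) r, g t) := by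
  have hgnn : ∀ t ∈ Ioc (0:ℝ) r, 0 ≤ g t := fun t ht =>
    hasSum_le (fun k => mul_nonneg (hf k) (pow_nonneg ht.1.le k)) hasSum_zero (hg t ht)
  have hgnn' : 0 ≤ᵐ[volume.restrict (Ioc (0:ℝ) r)] g := by
    filter_upwards [ae_restrict_mem measurableSet_Ioc] with t ht using hgnn t ht
  have hti : ∀ k : ℕ, IntegrableOn (fun t : ℝ => f k * t ^ k) (Ioc 0 r) :=
    fun k => (continuous_const.mul (continuous_pow k)).integrableOn_Ioc
  have htv : ∀ k : ℕ, ∫ t in Ioc (0:ℝ) r, f k * t ^ k = f k * (r ^ (k + 1) / ((k : ℝ) + 1)) := by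
    intro k
    rw [← intervalIntegral.integral_of_le hr0.le, intervalIntegral.integral_const_mul,
      integral_pow]
    norm_num
  have htnn : ∀ k : ℕ, 0 ≤ᵐ[volume.restrict (Ioc (0:ℝ) r)] fun t : ℝ => f k * t ^ k := by
    intro k
    filter_upwards [ae_restrict_mem measurableSet_Ioc] with t ht
    exact mul_nonneg (hf k) (pow_nonneg ht.1.le k)
  have key : ∑' k : ℕ, ENNReal.ofReal (f k * (r ^ (k + 1) / ((k : ℝ) + 1)))
      = ENNReal.ofReal (∫ t in Ioc (0:ℝ) r, g t) := by
    have step1 : ∀ k : ℕ, ENNReal.ofReal (f k * (r ^ (k + 1) / ((k : ℝ) + 1)))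
        = ∫⁻ t in Ioc (0:ℝ) r, ENNReal.ofReal (f k * t ^ k) := by
      intro k
      rw [← htv k]
      exact MeasureTheory.ofReal_integral_eq_lintegral_ofReal (hti k) (htnn k)
    have hmeas : ∀ k : ℕ, AEMeasurable (fun t : ℝ => ENNReal.ofReal (f k * t ^ k))
        (volume.restrict (Ioc (0:ℝ) r)) := fun k =>
      ENNReal.measurable_ofReal.comp_aemeasurable (hti k).aestronglyMeasurable.aemeasurable
    have hcongr : (∫⁻ t in Ioc (0:ℝ) r, ∑' k : ℕ, ENNReal.ofReal (f k * t ^ k))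
        = ∫⁻ t in Ioc (0:ℝ) r, ENNReal.ofReal (g t) := by
      refine setLIntegral_congr_fun measurableSet_Ioc (fun t ht => ?_)
      have h := hg t ht
      rw [← h.tsum_eq, ← ENNReal.ofReal_tsum_of_nonneg
        (fun k => mul_nonneg (hf k) (pow_nonneg ht.1.le k)) h.summable]
    simp_rw [step1]
    rw [← MeasureTheory.lintegral_tsum hmeas, hcongr,
      ← MeasureTheory.ofReal_integral_eq_lintegral_ofReal hgi hgnn']
  exact hasSum_of_ofReal_tsum
    (fun k => mul_nonneg (hf k) (div_nonneg (pow_nonneg hr0.le _) (by positivity)))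
    (setIntegral_nonneg measurableSet_Ioc hgnn) key

lemma integral_one_sub_rpow {γ : ℝ} (hγ1 : γ ≠ 1) {r : ℝ} (hr0 : 0 < r) (hr1 : r < 1) :
    ∫ t in Ioc (0:ℝ) r, (1 - t) ^ (-γ) = (1 - (1 - r) ^ (1 - γ)) / (1 - γ) := by
  have huIcc : Set.uIcc (0:ℝ) r = Set.Icc 0 r := Set.uIcc_of_le hr0.le
  have hpos : ∀ x ∈ Set.uIcc (0:ℝ) r, 0 < 1 - x := by
    intro x hx
    rw [huIcc] at hx
    have := hx.2
    linarith
  have hcont : ContinuousOn (fun t : ℝ => (1 - t) ^ (-γ)) (Set.uIcc 0 r) := by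
    refine ContinuousOn.rpow_const ?_ fun x hx => Or.inl (hpos x hx).ne'
    exact (continuous_const.sub continuous_id).continuousOn
  have hne : (1:ℝ) - γ ≠ 0 := sub_ne_zero.2 (Ne.symm hγ1)
  have hderiv : ∀ x ∈ Set.uIcc (0:ℝ) r,
      HasDerivAt (fun t : ℝ => (1 - (1 - t) ^ (1 - γ)) / (1 - γ)) ((1 - x) ^ (-γ)) x := by
    intro x hx
    have hx1 : 0 < 1 - x := hpos x hx
    have h1 : HasDerivAt (fun t : ℝ => 1 - t) (-1) x := (hasDerivAt_id x).const_sub 1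
    have h2 := h1.rpow_const (p := 1 - γ) (Or.inl hx1.ne')
    have h3 := (h2.const_sub 1).div_const (1 - γ)
    convert h3 using 1
    rfl
    rfl
    rw [show (1 : ℝ) - γ - 1 = -γ by ring]
    field_simp
  rw [← intervalIntegral.integral_of_le hr0.le,
    intervalIntegral.integral_eq_sub_of_hasDerivAt hderiv hcont.intervalIntegrable]
  norm_num

theorem cesaro_bohr_beta_normalized (β : ℝ) (hβ : 0 < β) (hβ1 : β ≠ 1)
    (a : ℕ → ℝ) (ha : ∀ k, 0 ≤ a k) (ha1 : a 1 ≤ 1)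
    (hak : ∀ k, 2 ≤ k → a k ≤ 1 - (a 1) ^ 2)
    (r : ℝ) (hr : r ∈ Set.Ioo (0 : ℝ) 1)
    (hR : 2 * ((1 - r) ^ (-β) - 1) / β ≤ 3 * (1 - (1 - r) ^ (1 - β)) / (1 - β)) :
    ∑' k : ℕ, r ^ (k + 1) * ((1 / (k + 1 : ℝ)) *
        ∑ n ∈ Finset.range (k + 1),
          Real.Gamma (((k - n : ℕ) : ℝ) + β) /
            (Real.Gamma (((k - n : ℕ) : ℝ) + 1) * Real.Gamma β) * a (n + 1))
      ≤ (1 - (1 - r) ^ (1 - β)) / (1 - β) := by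
  obtain ⟨hr0, hr1⟩ := hr
  have h1r : 0 < 1 - r := by linarith
  set A : ℝ := (1 - (1 - r) ^ (1 - β)) / (1 - β) with hA_def
  have hgi1 : IntegrableOn (fun t : ℝ => (1 - t) ^ (-β)) (Ioc 0 r) := by
    refine (ContinuousOn.integrableOn_Icc ?_).mono_set Set.Ioc_subset_Icc_self
    refine ContinuousOn.rpow_const
      ((continuous_const.sub continuous_id).continuousOn) fun x hx => Or.inl ?_
    have := hx.2
    exact (by linarith : (0:ℝ) < 1 - x).ne'
  have hgi3 : IntegrableOn (fun t : ℝ => (1 - t) ^ (-(β + 1))) (Ioc 0 r) := by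
    refine (ContinuousOn.integrableOn_Icc ?_).mono_set Set.Ioc_subset_Icc_self
    refine ContinuousOn.rpow_const
      ((continuous_const.sub continuous_id).continuousOn) fun x hx => Or.inl ?_
    have := hx.2
    exact (by linarith : (0:ℝ) < 1 - x).ne'
  have hgi2 : IntegrableOn (fun t : ℝ => t * (1 - t) ^ (-(β + 1))) (Ioc 0 r) := by
    refine (ContinuousOn.integrableOn_Icc ?_).mono_set Set.Ioc_subset_Icc_self
    refine continuousOn_id.mul (ContinuousOn.rpow_const
      ((continuous_const.sub continuous_id).continuousOn) fun x hx => Or.inl ?_)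
    have := hx.2
    exact (by linarith : (0:ℝ) < 1 - x).ne'
  have hA : HasSum (fun k : ℕ => ccoef β k * (r ^ (k + 1) / ((k : ℝ) + 1))) A := by
    have h := hasSum_mul_integral hr0 hr1 (ccoef β) (ccoef_nonneg hβ) _
      (fun t ht => hasSum_ccoef_pow hβ ht.1.le (lt_of_le_of_lt ht.2 hr1)) hgi1
    rwa [integral_one_sub_rpow hβ1 hr0 hr1] at h
  have hB : HasSum (fun k : ℕ => psum β k * (r ^ (k + 1) / ((k : ℝ) + 1)))
      (∫ t in Ioc (0:ℝ) r, t * (1 - t) ^ (-(β + 1))) :=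
    hasSum_mul_integral hr0 hr1 (psum β) (psum_nonneg hβ) _
      (fun t ht => hasSum_psum_pow hβ ht.1.le (lt_of_le_of_lt ht.2 hr1)) hgi2
  set B : ℝ := ∫ t in Ioc (0:ℝ) r, t * (1 - t) ^ (-(β + 1)) with hB_def
  have hBval : B = ((1 - r) ^ (-β) - 1) / β - A := by
    have hsplit : ∀ t ∈ Ioc (0:ℝ) r,
        t * (1 - t) ^ (-(β + 1)) = (1 - t) ^ (-(β + 1)) - (1 - t) ^ (-β) := by
      intro t ht
      have h1t : 0 < 1 - t := by have := ht.2; linarith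
      have hx : (1 - t) ^ (-β) = (1 - t) * (1 - t) ^ (-(β + 1)) := by
        rw [show -β = 1 + (-(β + 1)) by ring, Real.rpow_add h1t, Real.rpow_one]
      rw [hx]; ring
    rw [hB_def, setIntegral_congr_fun measurableSet_Ioc hsplit, integral_sub hgi3 hgi1,
      integral_one_sub_rpow (γ := β + 1) (by linarith) hr0 hr1,
      integral_one_sub_rpow hβ1 hr0 hr1, ← hA_def]
    congr 1
    rw [show (1:ℝ) - (β + 1) = -β by ring, div_neg, ← neg_div, neg_sub]
  have hAnn : 0 ≤ A := hasSum_le (fun k => mul_nonneg (ccoef_nonneg hβ k)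
    (div_nonneg (pow_nonneg hr0.le _) (by positivity))) hasSum_zero hA
  have hBnn : 0 ≤ B := hasSum_le (fun k => mul_nonneg (psum_nonneg hβ k)
    (div_nonneg (pow_nonneg hr0.le _) (by positivity))) hasSum_zero hB
  have hU : HasSum (fun k : ℕ => a 1 * (ccoef β k * (r ^ (k + 1) / ((k : ℝ) + 1)))
      + (1 - (a 1) ^ 2) * (psum β k * (r ^ (k + 1) / ((k : ℝ) + 1))))
      (a 1 * A + (1 - (a 1) ^ 2) * B) := (hA.mul_left _).add (hB.mul_left _)
  have ha1nn : 0 ≤ a 1 := ha 1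
  have ha1sq : 0 ≤ 1 - (a 1) ^ 2 := by nlinarith
  have hle : ∀ k : ℕ, r ^ (k + 1) * ((1 / (k + 1 : ℝ)) *
        ∑ n ∈ Finset.range (k + 1),
          Real.Gamma (((k - n : ℕ) : ℝ) + β) /
            (Real.Gamma (((k - n : ℕ) : ℝ) + 1) * Real.Gamma β) * a (n + 1))
      ≤ a 1 * (ccoef β k * (r ^ (k + 1) / ((k : ℝ) + 1)))
      + (1 - (a 1) ^ 2) * (psum β k * (r ^ (k + 1) / ((k : ℝ) + 1))) := by
    intro k
    have hc : ∀ n ∈ Finset.range (k + 1),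
        Real.Gamma (((k - n : ℕ) : ℝ) + β) /
            (Real.Gamma (((k - n : ℕ) : ℝ) + 1) * Real.Gamma β) * a (n + 1)
          = ccoef β (k - n) * a (n + 1) := fun n _ => rfl
    rw [Finset.sum_congr rfl hc]
    have hsum_le : ∑ n ∈ Finset.range (k + 1), ccoef β (k - n) * a (n + 1)
        ≤ ccoef β k * a 1 + (1 - (a 1) ^ 2) * psum β k := by
      rw [Finset.sum_range_succ']
      simp only [Nat.sub_zero]
      have h1 : ∑ i ∈ Finset.range k, ccoef β (k - (i + 1)) * a (i + 1 + 1)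
          ≤ (1 - (a 1) ^ 2) * psum β k := by
        calc ∑ i ∈ Finset.range k, ccoef β (k - (i + 1)) * a (i + 1 + 1)
            ≤ ∑ i ∈ Finset.range k, ccoef β (k - (i + 1)) * (1 - (a 1) ^ 2) :=
              Finset.sum_le_sum fun i _ =>
                mul_le_mul_of_nonneg_left (hak (i + 1 + 1) (by omega)) (ccoef_nonneg hβ _)
          _ = (1 - (a 1) ^ 2) * ∑ i ∈ Finset.range k, ccoef β (k - 1 - i) := by
              rw [Finset.mul_sum]
              exact Finset.sum_congr rfl fun i _ => by
                rw [show k - (i + 1) = k - 1 - i from by omega, mul_comm]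
          _ = (1 - (a 1) ^ 2) * psum β k := by
              rw [Finset.sum_range_reflect, psum]
      linarith
    calc r ^ (k + 1) * ((1 / (k + 1 : ℝ)) *
          ∑ n ∈ Finset.range (k + 1), ccoef β (k - n) * a (n + 1))
        ≤ r ^ (k + 1) * ((1 / (k + 1 : ℝ)) *
          (ccoef β k * a 1 + (1 - (a 1) ^ 2) * psum β k)) := by
          refine mul_le_mul_of_nonneg_left
            (mul_le_mul_of_nonneg_left hsum_le (by positivity)) (by positivity)
      _ = a 1 * (ccoef β k * (r ^ (k + 1) / ((k : ℝ) + 1)))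
          + (1 - (a 1) ^ 2) * (psum β k * (r ^ (k + 1) / ((k : ℝ) + 1))) := by
          field_simp
  have htnn : ∀ k : ℕ, 0 ≤ r ^ (k + 1) * ((1 / (k + 1 : ℝ)) *
        ∑ n ∈ Finset.range (k + 1),
          Real.Gamma (((k - n : ℕ) : ℝ) + β) /
            (Real.Gamma (((k - n : ℕ) : ℝ) + 1) * Real.Gamma β) * a (n + 1)) := by
    intro k
    refine mul_nonneg (pow_nonneg hr0.le _) (mul_nonneg (by positivity)
      (Finset.sum_nonneg fun n _ => mul_nonneg (ccoef_nonneg hβ (k - n)) (ha _)))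
  have hsm : Summable fun k : ℕ => r ^ (k + 1) * ((1 / (k + 1 : ℝ)) *
        ∑ n ∈ Finset.range (k + 1),
          Real.Gamma (((k - n : ℕ) : ℝ) + β) /
            (Real.Gamma (((k - n : ℕ) : ℝ) + 1) * Real.Gamma β) * a (n + 1)) :=
    Summable.of_nonneg_of_le htnn hle hU.summable
  have hts := (Summable.tsum_le_tsum hle hsm hU.summable).trans_eq hU.tsum_eq
  refine hts.trans ?_
  have h3A : 3 * (1 - (1 - r) ^ (1 - β)) / (1 - β) = 3 * A := by
    rw [hA_def]; ring
  have h2X : 2 * ((1 - r) ^ (-β) - 1) / β = 2 * (((1 - r) ^ (-β) - 1) / β) :=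
    mul_div_assoc _ _ _
  rw [h3A, h2X] at hR
  have h2B : 2 * B ≤ A := by
    have : ((1 - r) ^ (-β) - 1) / β = B + A := by rw [hBval]; ring
    rw [this] at hR
    linarith
  nlinarith [mul_nonneg (sub_nonneg.2 ha1) (sub_nonneg.2 h2B),
    mul_nonneg (mul_nonneg (sub_nonneg.2 ha1) (sub_nonneg.2 ha1)) hBnn, ha1nn]
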